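/- Let σ ∈ (0, 1/2) and let {p_k} ⊆ Ω be a damped Newton sequence: for every k, X(p_k) ≠ 0, DX(p_k) is invertible, v_k = −(DX(p_k))⁻¹ X(p_k), α_k = 2^{−j_k} where j_k is the least natural number j such that φ(p_k + 2^{−j} v_k) ≤ φ(p_k) − σ 2^{−j} ‖X(p_k)‖², and p_{k+1} = p_k + α_k v_k. Suppose p̄ ∈ Ω is an accumulation point of {p_k}, X is differentiable on Ω, the map p ↦ DX(p) is continuous at p̄, and DX(p̄) is invertible. Then there exists k₀ such that α_k = 1 and p_{k+1} = p_k − (DX(p_k))⁻¹ X(p_k) for all k ≥ k₀, and the whole sequence {p_k} converges superlinearly to p̄: p_k → p̄ and for every ε > 0 there is K with ‖p_{k+1} − p̄‖ ≤ ε ‖p_k − p̄‖ for all k ≥ K. -/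

import Mathlib

open Filter Metric Topology Set
open scoped RealInnerProductSpace

/-- Key local estimates for the Newton map near a zero `pbar` of `X` with invertible
derivative. -/
lemma newton_key_local {E : Type*} [NormedAddCommGroup E] [InnerProductSpace ℝ E]
    [FiniteDimensional ℝ E]
    (Ω : Set E) (hΩ : IsOpen Ω) (X : E → E) (DX : E → (E →L[ℝ] E))
    (hX : ∀ q ∈ Ω, HasFDerivAt X (DX q) q)
    (pbar : E) (hpbar : pbar ∈ Ω) (hX0 : X pbar = 0)
    (hcont : ContinuousAt DX pbar) (hinv : IsUnit (DX pbar))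
    {c : ℝ} (hc : 0 < c) :
    ∃ r > 0, Metric.ball pbar r ⊆ Ω ∧ ∀ q ∈ Metric.ball pbar r,
      IsUnit (DX q) ∧
      ‖q - Ring.inverse (DX q) (X q) - pbar‖ ≤ c * ‖q - pbar‖ ∧
      ‖q - pbar‖ ≤ 2 * ‖Ring.inverse (DX pbar)‖ * ‖X q‖ ∧
      ‖X q‖ ≤ (‖DX pbar‖ + 1) * ‖q - pbar‖ := by
  set A := DX pbar with hA
  set M : ℝ := ‖Ring.inverse A‖ with hM
  have hM0 : 0 ≤ M := norm_nonneg _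
  set ε : ℝ := min (min 1 (1 / (2 * (M + 1)))) (c / (2 * (M + 1))) with hε
  have hMpos : 0 < 2 * (M + 1) := by linarith
  have hεpos : 0 < ε := by
    refine lt_min (lt_min one_pos (by positivity)) (by positivity)
  have hε1 : ε ≤ 1 := le_trans (min_le_left _ _) (min_le_left _ _)
  have hε2 : ε ≤ 1 / (2 * (M + 1)) := le_trans (min_le_left _ _) (min_le_right _ _)
  have hε3 : ε ≤ c / (2 * (M + 1)) := min_le_right _ _
  -- eventual statements in the neighborhood of pbar
  have e1 : ∀ᶠ q in 𝓝 pbar, IsUnit (DX q) :=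
    hcont.eventually_mem (Units.isOpen.mem_nhds hinv)
  have hInvCont : ContinuousAt (fun q => Ring.inverse (DX q)) pbar := by
    have h1 : ContinuousAt (Ring.inverse : (E →L[ℝ] E) → (E →L[ℝ] E)) (DX pbar) := by
      have := NormedRing.inverse_continuousAt hinv.unit
      rwa [IsUnit.unit_spec] at this
    exact h1.comp hcont
  have e2 : ∀ᶠ q in 𝓝 pbar, ‖Ring.inverse (DX q)‖ ≤ M + 1 := by
    have : Filter.Tendsto (fun q => ‖Ring.inverse (DX q)‖) (𝓝 pbar) (𝓝 M) :=
      hInvCont.norm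
    exact this.eventually_le_const (by linarith)
  have e3 : ∀ᶠ q in 𝓝 pbar, ‖X q - A (q - pbar)‖ ≤ ε * ‖q - pbar‖ := by
    have h := (hX pbar hpbar).isLittleO
    have h2 := (Asymptotics.isLittleO_iff.mp h) hεpos
    filter_upwards [h2] with q hq
    simpa [hX0] using hq
  have e4 : ∀ᶠ q in 𝓝 pbar, ‖DX q - A‖ ≤ ε := by
    have h : Filter.Tendsto (fun q => ‖DX q - A‖) (𝓝 pbar) (𝓝 0) := by
      have h0 : Filter.Tendsto (fun q => DX q - A) (𝓝 pbar) (𝓝 (DX pbar - A)) :=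
        hcont.sub tendsto_const_nhds
      have h1 := h0.norm
      simpa [hA] using h1
    exact h.eventually_le_const hεpos
  have e5 : ∀ᶠ q in 𝓝 pbar, q ∈ Ω := hΩ.eventually_mem hpbar
  obtain ⟨r, hrpos, hr⟩ := Metric.eventually_nhds_iff_ball.mp
    (((e1.and e2).and (e3.and e4)).and e5)
  refine ⟨r, hrpos, ?_, ?_⟩
  · intro q hq; exact (hr q hq).2
  intro q hq
  obtain ⟨⟨⟨hU, hMq⟩, ⟨h3, h4⟩⟩, _⟩ := hr q hq
  refine ⟨hU, ?_, ?_, ?_⟩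
  · -- contraction estimate
    have hBA : ∀ w, Ring.inverse (DX q) ((DX q) w) = w := by
      intro w
      have h := Ring.inverse_mul_cancel (DX q) hU
      calc Ring.inverse (DX q) ((DX q) w) = (Ring.inverse (DX q) * DX q) w := rfl
        _ = (1 : E →L[ℝ] E) w := by rw [h]
        _ = w := rfl
    have hid : q - Ring.inverse (DX q) (X q) - pbar
        = Ring.inverse (DX q) ((DX q - A) (q - pbar) + (A (q - pbar) - X q)) := by
      have h1 : (DX q - A) (q - pbar) + (A (q - pbar) - X q)
          = (DX q) (q - pbar) - X q := by
        simp [ContinuousLinearMap.sub_apply]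
      rw [h1, map_sub, hBA]
      abel
    have hb1 : ‖(DX q - A) (q - pbar)‖ ≤ ε * ‖q - pbar‖ := by
      calc ‖(DX q - A) (q - pbar)‖ ≤ ‖DX q - A‖ * ‖q - pbar‖ :=
            ContinuousLinearMap.le_opNorm _ _
        _ ≤ ε * ‖q - pbar‖ := by
            exact mul_le_mul_of_nonneg_right h4 (norm_nonneg _)
    have hb2 : ‖A (q - pbar) - X q‖ ≤ ε * ‖q - pbar‖ := by
      rw [norm_sub_rev]; exact h3
    calc ‖q - Ring.inverse (DX q) (X q) - pbar‖
        = ‖Ring.inverse (DX q) ((DX q - A) (q - pbar) + (A (q - pbar) - X q))‖ := by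
          rw [hid]
      _ ≤ ‖Ring.inverse (DX q)‖ * ‖(DX q - A) (q - pbar) + (A (q - pbar) - X q)‖ :=
          ContinuousLinearMap.le_opNorm _ _
      _ ≤ (M + 1) * (ε * ‖q - pbar‖ + ε * ‖q - pbar‖) := by
          refine mul_le_mul hMq (le_trans (norm_add_le _ _) (add_le_add hb1 hb2))
            (norm_nonneg _) (by linarith)
      _ = (2 * (M + 1) * ε) * ‖q - pbar‖ := by ring
      _ ≤ c * ‖q - pbar‖ := by
          refine mul_le_mul_of_nonneg_right ?_ (norm_nonneg _)
          calc 2 * (M + 1) * ε ≤ 2 * (M + 1) * (c / (2 * (M + 1))) :=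
                mul_le_mul_of_nonneg_left hε3 (by linarith)
            _ = c := by field_simp
  · -- lower bound on ‖X q‖
    have hBAbar : Ring.inverse A (A (q - pbar)) = q - pbar := by
      have h := Ring.inverse_mul_cancel A hinv
      calc Ring.inverse A (A (q - pbar)) = (Ring.inverse A * A) (q - pbar) := rfl
        _ = (1 : E →L[ℝ] E) (q - pbar) := by rw [h]
        _ = q - pbar := rfl
    have h5 : ‖q - pbar‖ ≤ M * ‖A (q - pbar)‖ := by
      calc ‖q - pbar‖ = ‖Ring.inverse A (A (q - pbar))‖ := by rw [hBAbar]
        _ ≤ M * ‖A (q - pbar)‖ := ContinuousLinearMap.le_opNorm _ _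
    have h6 : ‖A (q - pbar)‖ ≤ ‖X q‖ + ε * ‖q - pbar‖ := by
      calc ‖A (q - pbar)‖ = ‖X q - (X q - A (q - pbar))‖ := by rw [sub_sub_cancel]
        _ ≤ ‖X q‖ + ‖X q - A (q - pbar)‖ := norm_sub_le _ _
        _ ≤ ‖X q‖ + ε * ‖q - pbar‖ := by linarith
    have hMε : M * ε ≤ 1 / 2 := by
      calc M * ε ≤ M * (1 / (2 * (M + 1))) :=
            mul_le_mul_of_nonneg_left hε2 hM0
        _ ≤ 1 / 2 := by
          rw [mul_one_div, div_le_div_iff₀ (by linarith) (by norm_num)]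
          nlinarith
    nlinarith [norm_nonneg (q - pbar), norm_nonneg (X q)]
  · -- upper bound on ‖X q‖
    have h7 : ‖A (q - pbar)‖ ≤ ‖A‖ * ‖q - pbar‖ := ContinuousLinearMap.le_opNorm _ _
    have h8 : ‖X q‖ ≤ ‖A (q - pbar)‖ + ε * ‖q - pbar‖ := by
      calc ‖X q‖ = ‖A (q - pbar) + (X q - A (q - pbar))‖ := by congr 1; abel
        _ ≤ ‖A (q - pbar)‖ + ‖X q - A (q - pbar)‖ := norm_add_le _ _
        _ ≤ ‖A (q - pbar)‖ + ε * ‖q - pbar‖ := by linarith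
    have : ε * ‖q - pbar‖ ≤ 1 * ‖q - pbar‖ :=
      mul_le_mul_of_nonneg_right hε1 (norm_nonneg _)
    calc ‖X q‖ ≤ ‖A‖ * ‖q - pbar‖ + ε * ‖q - pbar‖ := by linarith
      _ ≤ ‖A‖ * ‖q - pbar‖ + 1 * ‖q - pbar‖ := by linarith
      _ = (‖A‖ + 1) * ‖q - pbar‖ := by ring


set_option maxHeartbeats 1000000 in
lemma newton_accum_zero {E : Type*} [NormedAddCommGroup E] [InnerProductSpace ℝ E]
    [FiniteDimensional ℝ E]
    (Ω : Set E) (hΩ : IsOpen Ω) (X : E → E) (DX : E → (E →L[ℝ] E))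
    (hX : ∀ q ∈ Ω, HasFDerivAt X (DX q) q)
    (σ : ℝ) (hσ0 : 0 < σ) (hσ1 : σ < 1 / 2)
    (p v : ℕ → E) (j : ℕ → ℕ)
    (hXk : ∀ k, X (p k) ≠ 0)
    (hv : ∀ k, v k = -(Ring.inverse (DX (p k)) (X (p k))))
    (harmijo : ∀ k, (1 / 2 : ℝ) * ‖X (p k + ((1 / 2 : ℝ) ^ j k) • v k)‖ ^ 2 ≤
        (1 / 2 : ℝ) * ‖X (p k)‖ ^ 2 - σ * (1 / 2 : ℝ) ^ j k * ‖X (p k)‖ ^ 2)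
    (hleast : ∀ k, ∀ i < j k,
        ¬ ((1 / 2 : ℝ) * ‖X (p k + ((1 / 2 : ℝ) ^ i) • v k)‖ ^ 2 ≤
          (1 / 2 : ℝ) * ‖X (p k)‖ ^ 2 - σ * (1 / 2 : ℝ) ^ i * ‖X (p k)‖ ^ 2))
    (hrec : ∀ k, p (k + 1) = p k + ((1 / 2 : ℝ) ^ j k) • v k)
    (pbar : E) (hpbar : pbar ∈ Ω)
    (φs : ℕ → ℕ) (hmono : StrictMono φs)
    (hacc : Filter.Tendsto (p ∘ φs) Filter.atTop (nhds pbar))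
    (hcont : ContinuousAt DX pbar)
    (hinv : IsUnit (DX pbar)) : X pbar = 0 := by
  by_contra hne
  set ψ : ℕ → ℝ := fun k => ‖X (p k)‖ ^ 2 with hψ
  have hψpos : ∀ k, 0 < ψ k := fun k =>
    pow_pos (norm_pos_iff.mpr (hXk k)) 2
  have hdec : ∀ k, ψ (k + 1) ≤ ψ k - 2 * σ * (1 / 2 : ℝ) ^ j k * ψ k := by
    intro k
    have h := harmijo k
    have h2 : ψ (k + 1) = ‖X (p k + ((1 / 2 : ℝ) ^ j k) • v k)‖ ^ 2 := by
      show ‖X (p (k + 1))‖ ^ 2 = _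
      rw [hrec k]
    rw [h2]; simp only [hψ]; linarith
  have hpow_pos : ∀ k, (0:ℝ) < (1 / 2 : ℝ) ^ j k := fun k => by positivity
  have hanti : Antitone ψ := antitone_nat_of_succ_le fun k => by
    have h1 := hdec k
    have h2 := hpow_pos k
    nlinarith [mul_pos (mul_pos hσ0 h2) (hψpos k)]
  have hbdd : BddBelow (Set.range ψ) := ⟨0, fun x ⟨k, hk⟩ => hk ▸ (hψpos k).le⟩
  have hL : Filter.Tendsto ψ atTop (𝓝 (⨅ i, ψ i)) := tendsto_atTop_ciInf hanti hbdd
  have hdiff0 : Filter.Tendsto (fun k => ψ k - ψ (k + 1)) atTop (𝓝 0) := by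
    have h1 : Filter.Tendsto (fun k => ψ (k + 1)) atTop (𝓝 (⨅ i, ψ i)) :=
      hL.comp (tendsto_add_atTop_nat 1)
    have := hL.sub h1
    simpa using this
  have hαψ : Filter.Tendsto (fun k => (1 / 2 : ℝ) ^ j k * ψ k) atTop (𝓝 0) := by
    refine squeeze_zero (g := fun k => (ψ k - ψ (k + 1)) / (2 * σ))
      (fun k => by positivity) (fun k => ?_) ?_
    · show (1 / 2 : ℝ) ^ j k * ψ k ≤ (ψ k - ψ (k + 1)) / (2 * σ)
      have h1 := hdec k
      rw [le_div_iff₀ (by linarith)]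
      nlinarith
    · have := hdiff0.div_const (2 * σ)
      simpa using this
  have hXc : ContinuousAt X pbar := (hX pbar hpbar).continuousAt
  have hXt : Filter.Tendsto (fun m => X (p (φs m))) atTop (𝓝 (X pbar)) :=
    hXc.tendsto.comp hacc
  set c : ℝ := ‖X pbar‖ ^ 2 with hcdef
  have hcpos : 0 < c := pow_pos (norm_pos_iff.mpr hne) 2
  have hψbar : Filter.Tendsto (fun m => ψ (φs m)) atTop (𝓝 c) := by
    have := (hXt.norm).pow 2
    simpa [hψ, hcdef] using this
  have hαsub : Filter.Tendsto (fun m => (1 / 2 : ℝ) ^ j (φs m) * ψ (φs m)) atTop (𝓝 0) :=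
    hαψ.comp hmono.tendsto_atTop
  have hα0 : Filter.Tendsto (fun m => (1 / 2 : ℝ) ^ j (φs m)) atTop (𝓝 0) := by
    have h1 := hαsub.div hψbar hcpos.ne'
    rw [zero_div] at h1
    have h2 : ∀ m, (1 / 2 : ℝ) ^ j (φs m) * ψ (φs m) / ψ (φs m) = (1 / 2 : ℝ) ^ j (φs m) :=
      fun m => mul_div_cancel_right₀ _ (hψpos (φs m)).ne'
    exact h1.congr h2
  have hj : Filter.Tendsto (fun m => j (φs m)) atTop atTop := by
    refine Filter.tendsto_atTop.mpr fun b => ?_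
    have h1 : ∀ᶠ m in atTop, (1 / 2 : ℝ) ^ j (φs m) < (1 / 2 : ℝ) ^ b :=
      hα0.eventually_lt_const (by positivity)
    filter_upwards [h1] with m hm
    exact le_of_lt ((pow_lt_pow_iff_right_of_lt_one₀ (by norm_num) (by norm_num)).mp hm)
  -- limit of Newton directions
  set vbar : E := -(Ring.inverse (DX pbar) (X pbar)) with hvbar
  have hDXt : Filter.Tendsto (fun m => DX (p (φs m))) atTop (𝓝 (DX pbar)) :=
    hcont.tendsto.comp hacc
  have hinvt : Filter.Tendsto (fun m => Ring.inverse (DX (p (φs m)))) atTop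
      (𝓝 (Ring.inverse (DX pbar))) := by
    have h1 : ContinuousAt (Ring.inverse : (E →L[ℝ] E) → (E →L[ℝ] E)) (DX pbar) := by
      have := NormedRing.inverse_continuousAt hinv.unit
      rwa [IsUnit.unit_spec] at this
    exact h1.tendsto.comp hDXt
  have hvt : Filter.Tendsto (fun m => v (φs m)) atTop (𝓝 vbar) := by
    have happ : Filter.Tendsto
        (fun m => (Ring.inverse (DX (p (φs m)))) (X (p (φs m)))) atTop
        (𝓝 ((Ring.inverse (DX pbar)) (X pbar))) := by
      have hpair : Filter.Tendsto
          (fun m => ((Ring.inverse (DX (p (φs m))) : E →L[ℝ] E), X (p (φs m)))) atTop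
          (𝓝 ((Ring.inverse (DX pbar) : E →L[ℝ] E), X pbar)) :=
        hinvt.prodMk_nhds hXt
      exact (isBoundedBilinearMap_apply.continuous.tendsto _).comp hpair
    have := happ.neg
    refine this.congr fun m => ?_
    rw [hv (φs m)]
  -- the function F and its continuity
  set F : E × E → ℝ := fun s => ⟪X s.1, (DX s.1) s.2⟫ with hF
  have hFc : ContinuousAt F (pbar, vbar) := by
    have hF1 : ContinuousAt (fun s : E × E => X s.1) (pbar, vbar) :=
      hXc.comp continuousAt_fst
    have hF2 : ContinuousAt (fun s : E × E => (DX s.1) s.2) (pbar, vbar) := by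
      have h1 : ContinuousAt (fun s : E × E => ((DX s.1 : E →L[ℝ] E), s.2)) (pbar, vbar) :=
        (hcont.comp continuousAt_fst).prodMk continuousAt_snd
      exact (isBoundedBilinearMap_apply.continuous.continuousAt).comp h1
    exact hF1.inner hF2
  have hABbar : ∀ w, DX pbar (Ring.inverse (DX pbar) w) = w := by
    intro w
    have h := Ring.mul_inverse_cancel (DX pbar) hinv
    calc DX pbar (Ring.inverse (DX pbar) w) = (DX pbar * Ring.inverse (DX pbar)) w := rfl
      _ = (1 : E →L[ℝ] E) w := by rw [h]
      _ = w := rfl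
  have hFval : F (pbar, vbar) = -c := by
    simp only [hF, hvbar, map_neg, hABbar]
    rw [inner_neg_right, real_inner_self_eq_norm_sq]
  set θ : ℝ := (σ * c + c) / 2 with hθ
  have hθ1 : σ * c < θ := by
    rw [hθ]; nlinarith
  have hθ2 : -c < -θ := by
    rw [hθ]; nlinarith
  obtain ⟨δ, hδpos, hδ⟩ := Metric.eventually_nhds_iff.mp
    ((hFc.tendsto.eventually_lt_const (hFval ▸ hθ2 : F (pbar, vbar) < -θ)))
  obtain ⟨ρ, hρpos, hρ⟩ := Metric.mem_nhds_iff.mp (hΩ.mem_nhds hpbar)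
  set δ' : ℝ := min δ ρ with hδ'
  have hδ'pos : 0 < δ' := lt_min hδpos hρpos
  set β : ℕ → ℝ := fun m => (1 / 2 : ℝ) ^ (j (φs m) - 1) with hβ
  have hβ0 : Filter.Tendsto β atTop (𝓝 0) := by
    have hjs : Filter.Tendsto (fun m => j (φs m) - 1) atTop atTop :=
      Filter.tendsto_atTop.mpr fun b =>
        (hj.eventually_ge_atTop (b + 1)).mono fun m h => by omega
    exact (tendsto_pow_atTop_nhds_zero_of_lt_one (by norm_num) (by norm_num)).comp hjs
  have hnv : Filter.Tendsto (fun m => ‖p (φs m) - pbar‖ + β m * ‖v (φs m)‖) atTop (𝓝 0) := by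
    have h1 : Filter.Tendsto (fun m => ‖p (φs m) - pbar‖) atTop (𝓝 0) := by
      have := (hacc.sub_const pbar).norm
      simpa using this
    have h2 : Filter.Tendsto (fun m => β m * ‖v (φs m)‖) atTop (𝓝 0) := by
      have := hβ0.mul hvt.norm
      simpa using this
    have := h1.add h2
    simpa using this
  -- pick a single index m with all required properties
  have E1 : ∀ᶠ m in atTop, 1 ≤ j (φs m) := hj.eventually_ge_atTop 1
  have E2 : ∀ᶠ m in atTop, ‖p (φs m) - pbar‖ + β m * ‖v (φs m)‖ < δ' :=
    hnv.eventually_lt_const hδ'pos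
  have E3 : ∀ᶠ m in atTop, dist (v (φs m)) vbar < δ :=
    hvt.eventually_mem (Metric.ball_mem_nhds _ hδpos)
  have E4 : ∀ᶠ m in atTop, σ * ψ (φs m) < θ := by
    have h1 : Filter.Tendsto (fun m => σ * ψ (φs m)) atTop (𝓝 (σ * c)) :=
      hψbar.const_mul σ
    exact h1.eventually_lt_const hθ1
  obtain ⟨m, hm1, hm2, hm3, hm4⟩ := (E1.and (E2.and (E3.and E4))).exists
  set K := φs m with hK
  set P := p K with hP
  set V := v K with hV
  set n := j K with hn
  set b : ℝ := β m with hb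
  have hbval : b = (1 / 2 : ℝ) ^ (n - 1) := rfl
  have hbpos : 0 < b := by rw [hbval]; positivity
  have hVnn : (0:ℝ) ≤ ‖V‖ := norm_nonneg _
  have hseg : ∀ t ∈ Set.Icc (0:ℝ) b, ‖P + t • V - pbar‖ < δ' := by
    intro t ⟨ht0, htb⟩
    have h1 : P + t • V - pbar = (P - pbar) + t • V := by abel
    calc ‖P + t • V - pbar‖ = ‖(P - pbar) + t • V‖ := by rw [h1]
      _ ≤ ‖P - pbar‖ + ‖t • V‖ := norm_add_le _ _
      _ = ‖P - pbar‖ + t * ‖V‖ := by rw [norm_smul, Real.norm_of_nonneg ht0]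
      _ ≤ ‖P - pbar‖ + b * ‖V‖ := by
          have := mul_le_mul_of_nonneg_right htb hVnn; linarith
      _ < δ' := hm2
  have hsegΩ : ∀ t ∈ Set.Icc (0:ℝ) b, P + t • V ∈ Ω := by
    intro t ht
    apply hρ
    rw [Metric.mem_ball, dist_eq_norm]
    exact lt_of_lt_of_le (hseg t ht) (min_le_right δ ρ)
  set g : ℝ → ℝ := fun t => ⟪X (P + t • V), X (P + t • V)⟫ with hg
  have hgd : ∀ t ∈ Set.Icc (0:ℝ) b, HasDerivAt g (2 * F (P + t • V, V)) t := by
    intro t ht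
    have hline : HasDerivAt (fun t : ℝ => P + t • V) V t := by
      have h1 := ((hasDerivAt_id t).smul_const V).const_add P
      simpa using h1
    have hXl : HasDerivAt (fun t => X (P + t • V)) ((DX (P + t • V)) V) t :=
      (hX _ (hsegΩ t ht)).comp_hasDerivAt t hline
    have h2 := hXl.inner ℝ hXl
    refine h2.congr_deriv ?_
    simp only [hF]
    rw [real_inner_comm (X (P + t • V)) ((DX (P + t • V)) V)]
    ring
  have hgc : ContinuousOn g (Set.Icc (0:ℝ) b) :=
    fun t ht => ((hgd t ht).continuousAt).continuousWithinAt
  obtain ⟨t₀, ht₀, hslope⟩ := exists_hasDerivAt_eq_slope g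
    (fun t => 2 * F (P + t • V, V)) hbpos hgc
    (fun t ht => hgd t (Set.mem_Ioo.mp ht |> fun ⟨h1, h2⟩ => ⟨le_of_lt h1, le_of_lt h2⟩))
  -- translate the failure of Armijo at step n-1
  have hnot := hleast K (n - 1) (by omega)
  push_neg at hnot
  have hψK : ψ K = ‖X P‖ ^ 2 := rfl
  have hg0 : g 0 = ψ K := by
    show ⟪X (P + (0:ℝ) • V), X (P + (0:ℝ) • V)⟫ = ψ K
    rw [zero_smul, add_zero, real_inner_self_eq_norm_sq, hψK]
  have hgb : g b = ‖X (P + b • V)‖ ^ 2 :=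
    real_inner_self_eq_norm_sq (X (P + b • V))
  rw [← hP, ← hV] at hnot
  clear_value F g ψ θ b n V P K
  rw [← hbval] at hnot
  have hgblt : ψ K - 2 * σ * b * ψ K < g b := by
    rw [hgb, hψK]
    nlinarith [hnot]
  have hslope2 : -(2 * σ * ψ K) < 2 * F (P + t₀ • V, V) := by
    rw [hslope, sub_zero]
    rw [lt_div_iff₀ hbpos]
    rw [hg0]
    nlinarith [hgblt]
  have hFlt : F (P + t₀ • V, V) < -θ := by
    apply hδ
    rw [Prod.dist_eq]
    refine max_lt ?_ hm3
    rw [dist_eq_norm]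
    exact lt_of_lt_of_le (hseg t₀ ⟨(Set.mem_Ioo.mp ht₀).1.le, (Set.mem_Ioo.mp ht₀).2.le⟩)
      (min_le_left δ ρ)
  have : σ * ψ K < θ := hm4
  linarith



/-- If a damped Newton sequence has an accumulation point `p̄` at which
`DX` is continuous and `DX p̄` is invertible, then eventually the stepsize is `α k = 1`
(full Newton steps `p (k+1) = p k - (DX (p k))⁻¹ (X (p k))`), and the whole sequence
converges superlinearly to `p̄`. -/
theorem damped_newton_global_superlinear_convergence {E : Type*}
    [NormedAddCommGroup E] [InnerProductSpace ℝ E] [FiniteDimensional ℝ E]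
    (Ω : Set E) (hΩ : IsOpen Ω) (X : E → E) (DX : E → (E →L[ℝ] E))
    (hX : ∀ q ∈ Ω, HasFDerivAt X (DX q) q)
    (σ : ℝ) (hσ0 : 0 < σ) (hσ1 : σ < 1 / 2)
    (p v : ℕ → E) (j : ℕ → ℕ)
    (hpΩ : ∀ k, p k ∈ Ω)
    (hXk : ∀ k, X (p k) ≠ 0)
    (hIU : ∀ k, IsUnit (DX (p k)))
    (hv : ∀ k, v k = -(Ring.inverse (DX (p k)) (X (p k))))
    (harmijo : ∀ k, (1 / 2 : ℝ) * ‖X (p k + ((1 / 2 : ℝ) ^ j k) • v k)‖ ^ 2 ≤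
        (1 / 2 : ℝ) * ‖X (p k)‖ ^ 2 - σ * (1 / 2 : ℝ) ^ j k * ‖X (p k)‖ ^ 2)
    (hleast : ∀ k, ∀ i < j k,
        ¬ ((1 / 2 : ℝ) * ‖X (p k + ((1 / 2 : ℝ) ^ i) • v k)‖ ^ 2 ≤
          (1 / 2 : ℝ) * ‖X (p k)‖ ^ 2 - σ * (1 / 2 : ℝ) ^ i * ‖X (p k)‖ ^ 2))
    (hrec : ∀ k, p (k + 1) = p k + ((1 / 2 : ℝ) ^ j k) • v k)
    (pbar : E) (hpbar : pbar ∈ Ω)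
    (φs : ℕ → ℕ) (hmono : StrictMono φs)
    (hacc : Filter.Tendsto (p ∘ φs) Filter.atTop (nhds pbar))
    (hcont : ContinuousAt DX pbar)
    (hinv : IsUnit (DX pbar)) :
    (∃ k₀ : ℕ, ∀ k ≥ k₀, (1 / 2 : ℝ) ^ j k = 1 ∧
        p (k + 1) = p k - Ring.inverse (DX (p k)) (X (p k))) ∧
      Filter.Tendsto p Filter.atTop (nhds pbar) ∧
      ∀ ε > 0, ∃ K : ℕ, ∀ k ≥ K, ‖p (k + 1) - pbar‖ ≤ ε * ‖p k - pbar‖ := by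
  have hX0 : X pbar = 0 :=
    newton_accum_zero Ω hΩ X DX hX σ hσ0 hσ1 p v j hXk hv harmijo hleast hrec
      pbar hpbar φs hmono hacc hcont hinv
  set A := DX pbar with hA
  set M : ℝ := ‖Ring.inverse A‖ with hM
  have hM0 : (0:ℝ) ≤ M := norm_nonneg _
  have hs : 0 < Real.sqrt (1 - 2 * σ) := Real.sqrt_pos.mpr (by linarith)
  set s : ℝ := Real.sqrt (1 - 2 * σ) with hsdef
  set K1 : ℝ := (‖A‖ + 1) * (2 * M) with hK1
  have hK1nn : (0:ℝ) ≤ K1 := by positivity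
  set c₀ : ℝ := min (1 / 2) (s / (K1 + 1)) with hc₀
  have hc₀pos : 0 < c₀ := lt_min (by norm_num) (by positivity)
  have hc₀half : c₀ ≤ 1 / 2 := min_le_left _ _
  have hc₀K : c₀ * K1 ≤ s := by
    have h1 : c₀ ≤ s / (K1 + 1) := min_le_right _ _
    calc c₀ * K1 ≤ (s / (K1 + 1)) * K1 := mul_le_mul_of_nonneg_right h1 hK1nn
      _ ≤ s := by
        rw [div_mul_eq_mul_div, div_le_iff₀ (by linarith)]
        nlinarith [hs.le]
  obtain ⟨r₀, hr₀pos, hr₀Ω, H0⟩ :=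
    newton_key_local Ω hΩ X DX hX pbar hpbar hX0 hcont hinv hc₀pos
  -- one full Newton step starting in the ball
  have hstep : ∀ k, p k ∈ Metric.ball pbar r₀ →
      ((1 / 2 : ℝ) ^ j k = 1 ∧
        p (k + 1) = p k - Ring.inverse (DX (p k)) (X (p k)) ∧
        ‖p (k + 1) - pbar‖ ≤ (1 / 2) * ‖p k - pbar‖ ∧
        p (k + 1) ∈ Metric.ball pbar r₀) := by
    intro k hk
    obtain ⟨hU, hcon, hlow, hup⟩ := H0 (p k) hk
    have hqnorm : ‖p k - pbar‖ < r₀ := by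
      rw [← dist_eq_norm]; exact Metric.mem_ball.mp hk
    have hNle : ‖p k - Ring.inverse (DX (p k)) (X (p k)) - pbar‖ ≤ ‖p k - pbar‖ := by
      have h2 : c₀ * ‖p k - pbar‖ ≤ 1 * ‖p k - pbar‖ :=
        mul_le_mul_of_nonneg_right (by linarith) (norm_nonneg _)
      calc ‖p k - Ring.inverse (DX (p k)) (X (p k)) - pbar‖ ≤ c₀ * ‖p k - pbar‖ := hcon
        _ ≤ 1 * ‖p k - pbar‖ := h2
        _ = ‖p k - pbar‖ := one_mul _
    have hNmem : p k - Ring.inverse (DX (p k)) (X (p k)) ∈ Metric.ball pbar r₀ := by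
      rw [Metric.mem_ball, dist_eq_norm]
      exact lt_of_le_of_lt hNle hqnorm
    obtain ⟨_, _, _, hupN⟩ := H0 _ hNmem
    have hchain : ‖X (p k - Ring.inverse (DX (p k)) (X (p k)))‖ ≤ s * ‖X (p k)‖ := by
      calc ‖X (p k - Ring.inverse (DX (p k)) (X (p k)))‖
          ≤ (‖A‖ + 1) * ‖p k - Ring.inverse (DX (p k)) (X (p k)) - pbar‖ := hupN
        _ ≤ (‖A‖ + 1) * (c₀ * ‖p k - pbar‖) :=
            mul_le_mul_of_nonneg_left hcon (by positivity)
        _ ≤ (‖A‖ + 1) * (c₀ * (2 * M * ‖X (p k)‖)) := by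
            refine mul_le_mul_of_nonneg_left ?_ (by positivity)
            exact mul_le_mul_of_nonneg_left hlow hc₀pos.le
        _ = (c₀ * K1) * ‖X (p k)‖ := by rw [hK1]; ring
        _ ≤ s * ‖X (p k)‖ := mul_le_mul_of_nonneg_right hc₀K (norm_nonneg _)
    have hsq : ‖X (p k - Ring.inverse (DX (p k)) (X (p k)))‖ ^ 2 ≤ (1 - 2 * σ) * ‖X (p k)‖ ^ 2 := by
      have h1 : ‖X (p k - Ring.inverse (DX (p k)) (X (p k)))‖ ^ 2 ≤ (s * ‖X (p k)‖) ^ 2 := by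
        nlinarith [norm_nonneg (X (p k - Ring.inverse (DX (p k)) (X (p k)))),
          norm_nonneg (X (p k)), hchain, mul_nonneg hs.le (norm_nonneg (X (p k)))]
      have h2 : (s * ‖X (p k)‖) ^ 2 = (1 - 2 * σ) * ‖X (p k)‖ ^ 2 := by
        rw [mul_pow, hsdef, Real.sq_sqrt (by linarith)]
      linarith
    have hqv : p k + ((1 / 2 : ℝ) ^ (0:ℕ)) • v k = p k - Ring.inverse (DX (p k)) (X (p k)) := by
      rw [pow_zero, one_smul, hv k, sub_eq_add_neg]
    have hArm0 : (1 / 2 : ℝ) * ‖X (p k + ((1 / 2 : ℝ) ^ (0:ℕ)) • v k)‖ ^ 2 ≤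
        (1 / 2 : ℝ) * ‖X (p k)‖ ^ 2 - σ * (1 / 2 : ℝ) ^ (0:ℕ) * ‖X (p k)‖ ^ 2 := by
      rw [hqv, pow_zero, mul_one]
      linarith [hsq]
    have hj0 : j k = 0 := by
      by_contra h
      exact hleast k 0 (Nat.pos_of_ne_zero h) hArm0
    have hrec' : p (k + 1) = p k - Ring.inverse (DX (p k)) (X (p k)) := by
      rw [hrec k, hj0, ← hqv]
    refine ⟨by rw [hj0, pow_zero], hrec', ?_, ?_⟩
    · rw [hrec']
      calc ‖p k - Ring.inverse (DX (p k)) (X (p k)) - pbar‖ ≤ c₀ * ‖p k - pbar‖ := hcon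
        _ ≤ (1 / 2) * ‖p k - pbar‖ :=
            mul_le_mul_of_nonneg_right hc₀half (norm_nonneg _)
    · rw [hrec']; exact hNmem
  -- entering the ball and staying there
  obtain ⟨m0, hm0⟩ := (hacc.eventually_mem (Metric.ball_mem_nhds pbar hr₀pos)).exists
  set k₀ := φs m0 with hk₀
  have hin : ∀ k, k₀ ≤ k → p k ∈ Metric.ball pbar r₀ := by
    intro k hk
    induction k, hk using Nat.le_induction with
    | base => exact hm0
    | succ k hk ih => exact (hstep k ih).2.2.2
  have hfull : ∀ k ≥ k₀, (1 / 2 : ℝ) ^ j k = 1 ∧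
      p (k + 1) = p k - Ring.inverse (DX (p k)) (X (p k)) :=
    fun k hk => ⟨(hstep k (hin k hk)).1, (hstep k (hin k hk)).2.1⟩
  have hgeom : ∀ n, ‖p (k₀ + n) - pbar‖ ≤ (1 / 2 : ℝ) ^ n * ‖p k₀ - pbar‖ := by
    intro n
    induction n with
    | zero => simp
    | succ n ih =>
      have h1 := (hstep (k₀ + n) (hin _ (Nat.le_add_right _ _))).2.2.1
      calc ‖p (k₀ + (n + 1)) - pbar‖ = ‖p ((k₀ + n) + 1) - pbar‖ := by ring_nf
        _ ≤ (1 / 2) * ‖p (k₀ + n) - pbar‖ := h1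
        _ ≤ (1 / 2) * ((1 / 2 : ℝ) ^ n * ‖p k₀ - pbar‖) := by linarith
        _ = (1 / 2 : ℝ) ^ (n + 1) * ‖p k₀ - pbar‖ := by ring
  have htend : Filter.Tendsto p atTop (𝓝 pbar) := by
    have h1 : Filter.Tendsto (fun n => p (k₀ + n) - pbar) atTop (𝓝 0) := by
      refine squeeze_zero_norm hgeom ?_
      have := (tendsto_pow_atTop_nhds_zero_of_lt_one
        (by norm_num : (0:ℝ) ≤ 1 / 2) (by norm_num : (1:ℝ)/2 < 1)).mul_const ‖p k₀ - pbar‖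
      simpa using this
    have h2 : Filter.Tendsto (fun n => p (k₀ + n)) atTop (𝓝 pbar) :=
      tendsto_sub_nhds_zero_iff.mp h1
    have h3 : Filter.Tendsto (fun n => p (n + k₀)) atTop (𝓝 pbar) :=
      h2.congr fun n => by rw [add_comm]
    exact (Filter.tendsto_add_atTop_iff_nat k₀).mp h3
  refine ⟨⟨k₀, hfull⟩, htend, ?_⟩
  intro ε hε
  have hc₁pos : 0 < min ε (1 / 2) := lt_min hε (by norm_num)
  obtain ⟨r₁, hr₁pos, hr₁Ω, H1⟩ :=
    newton_key_local Ω hΩ X DX hX pbar hpbar hX0 hcont hinv hc₁pos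
  have hev : ∀ᶠ k in atTop, p k ∈ Metric.ball pbar r₁ :=
    htend.eventually_mem (Metric.ball_mem_nhds _ hr₁pos)
  obtain ⟨K, hK⟩ := Filter.eventually_atTop.mp (hev.and (eventually_ge_atTop k₀))
  refine ⟨K, fun k hk => ?_⟩
  obtain ⟨hball, hk₀le⟩ := hK k hk
  obtain ⟨_, hcon1, _, _⟩ := H1 (p k) hball
  rw [(hfull k hk₀le).2]
  calc ‖p k - Ring.inverse (DX (p k)) (X (p k)) - pbar‖
      ≤ min ε (1 / 2) * ‖p k - pbar‖ := hcon1
    _ ≤ ε * ‖p k - pbar‖ :=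
      mul_le_mul_of_nonneg_right (min_le_left _ _) (norm_nonneg _)
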